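/- Exponential input-to-state bound for the load-torque/speed error cascade under PE: if Δ_m is continuous, bounded, and persistently exciting, and T̃ solves d T̃/dt = -γ_T Δ_m(t)² T̃ while ω̃ solves d ω̃/dt = -γ_ω Δ_m(t)² ω̃ - (1/J) T̃ with γ_T, γ_ω, J > 0, then there exist C, ρ > 0 such that |T̃(t)| + |ω̃(t)| ≤ C (|T̃(0)| + |ω̃(0)|) e^{-ρ t}. -/

import Mathlib

open Filter Real MeasureTheory

lemma aux_PE_lb (f : ℝ → ℝ) (hf : Continuous f) (hf0 : ∀ t, 0 ≤ f t)
    (T μ : ℝ) (hT : 0 < T) (hμ : 0 ≤ μ)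
    (hPE : ∀ t ≥ (0:ℝ), μ ≤ ∫ s in t..(t+T), f s)
    (s t : ℝ) (hs : 0 ≤ s) (hst : s ≤ t) :
    μ * ((t - s) / T - 1) ≤ ∫ x in s..t, f x := by
  have hint : ∀ a b : ℝ, IntervalIntegrable f volume a b :=
    fun a b => hf.intervalIntegrable a b
  have key : ∀ k : ℕ, (k : ℝ) * μ ≤ ∫ x in s..(s + (k:ℝ) * T), f x := by
    intro k
    induction k with
    | zero => simp
    | succ k ih =>
      push_cast
      have hadj := intervalIntegral.integral_add_adjacent_intervals
        (hint s (s + (k:ℝ)*T)) (hint (s + (k:ℝ)*T) (s + (k:ℝ)*T + T))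
      have hknn : (0:ℝ) ≤ (k:ℝ) := Nat.cast_nonneg k
      have hpe := hPE (s + (k:ℝ)*T) (by nlinarith)
      have heq : s + (k:ℝ)*T + T = s + ((k:ℝ)+1)*T := by ring
      rw [heq] at hadj hpe
      linarith
  set n : ℕ := ⌊(t - s) / T⌋₊ with hn
  have hfl := Nat.floor_le (a := (t-s)/T) (div_nonneg (by linarith) hT.le)
  have hnle : (n : ℝ) * T ≤ t - s := by
    rw [hn]
    calc (n:ℝ) * T ≤ ((t-s)/T) * T := by nlinarith
    _ = t - s := by field_simp
  have h1 : s + (n:ℝ) * T ≤ t := by linarith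
  have h2 : (∫ x in s..(s + (n:ℝ)*T), f x) ≤ ∫ x in s..t, f x := by
    have hadj := intervalIntegral.integral_add_adjacent_intervals
      (hint s (s + (n:ℝ)*T)) (hint (s + (n:ℝ)*T) t)
    have hnn : 0 ≤ ∫ x in (s + (n:ℝ)*T)..t, f x :=
      intervalIntegral.integral_nonneg h1 (fun x _ => hf0 x)
    linarith
  have h3 : μ * ((t - s)/T - 1) ≤ (n:ℝ) * μ := by
    have := Nat.sub_one_lt_floor ((t - s)/T)
    nlinarith
  calc μ * ((t-s)/T - 1) ≤ (n:ℝ) * μ := h3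
    _ ≤ _ := key n
    _ ≤ _ := h2

theorem stmt_16 (Δm : ℝ → ℝ) (hΔ : Continuous Δm) (M : ℝ) (hbdd : ∀ t, |Δm t| ≤ M)
    (T μ : ℝ) (hT : 0 < T) (hμ : 0 < μ)
    (hPE : ∀ t ≥ (0:ℝ), μ ≤ ∫ s in t..(t+T), (Δm s)^2)
    (γT γω J : ℝ) (hγT : 0 < γT) (hγω : 0 < γω) (hJ : 0 < J)
    (Ttil ωtil : ℝ → ℝ)
    (hT' : ∀ t, HasDerivAt Ttil (-γT * (Δm t)^2 * Ttil t) t)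
    (hω' : ∀ t, HasDerivAt ωtil (-γω * (Δm t)^2 * ωtil t - (1/J) * Ttil t) t) :
    ∃ C > (0:ℝ), ∃ ρ > (0:ℝ), ∀ t ≥ (0:ℝ),
      |Ttil t| + |ωtil t| ≤ C * (|Ttil 0| + |ωtil 0|) * Real.exp (-ρ * t) := by
  have hfc : Continuous (fun t : ℝ => (Δm t)^2) := hΔ.pow 2
  have hf0 : ∀ t : ℝ, 0 ≤ (Δm t)^2 := fun t => sq_nonneg _
  have hint : ∀ a b : ℝ, IntervalIntegrable (fun t : ℝ => (Δm t)^2) volume a b :=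
    fun a b => hfc.intervalIntegrable a b
  set F : ℝ → ℝ := fun t => ∫ x in (0:ℝ)..t, (Δm x)^2 with hF_def
  have hF' : ∀ t, HasDerivAt F ((Δm t)^2) t := by
    intro t
    exact intervalIntegral.integral_hasDerivAt_right (hint 0 t)
      hfc.aestronglyMeasurable.stronglyMeasurableAtFilter hfc.continuousAt
  have hF0 : F 0 = 0 := intervalIntegral.integral_same
  have hFcont : Continuous F := by
    have : Differentiable ℝ F := fun x => (hF' x).differentiableAt
    exact this.continuous
  have hTcont : Continuous Ttil := by
    have : Differentiable ℝ Ttil := fun x => (hT' x).differentiableAt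
    exact this.continuous
  -- lower bound on F increments from PE
  have hFdiff : ∀ s t : ℝ, 0 ≤ s → s ≤ t → μ * ((t - s)/T - 1) ≤ F t - F s := by
    intro s t hs hst
    have heq : F t - F s = ∫ x in s..t, (Δm x)^2 :=
      intervalIntegral.integral_interval_sub_left (hint 0 t) (hint 0 s)
    rw [heq]
    exact aux_PE_lb _ hfc hf0 T μ hT hμ.le hPE s t hs hst
  -- explicit solution for Ttil
  have hgderiv : ∀ t, HasDerivAt (fun t => Ttil t * Real.exp (γT * F t)) 0 t := by
    intro t
    have h2 : HasDerivAt (fun t => Real.exp (γT * F t))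
        (Real.exp (γT * F t) * (γT * (Δm t)^2)) t := ((hF' t).const_mul γT).exp
    have this : HasDerivAt (fun t => Ttil t * Real.exp (γT * F t)) _ t := (hT' t).mul h2
    convert this using 1
    ring
  have hTform : ∀ t, Ttil t = Ttil 0 * Real.exp (-(γT * F t)) := by
    intro t
    have hdiff : Differentiable ℝ (fun t => Ttil t * Real.exp (γT * F t)) :=
      fun x => (hgderiv x).differentiableAt
    have hconst := is_const_of_deriv_eq_zero hdiff (fun x => (hgderiv x).deriv) t 0
    simp only [hF0, mul_zero, Real.exp_zero, mul_one] at hconst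
    have : Ttil t = Ttil t * Real.exp (γT * F t) * Real.exp (-(γT * F t)) := by
      rw [mul_assoc, ← Real.exp_add]; simp
    rw [this, hconst]
  -- derivative of ωtil * exp(γω F)
  have hhderiv : ∀ t, HasDerivAt (fun t => ωtil t * Real.exp (γω * F t))
      (-(1/J) * Ttil t * Real.exp (γω * F t)) t := by
    intro t
    have h2 : HasDerivAt (fun t => Real.exp (γω * F t))
        (Real.exp (γω * F t) * (γω * (Δm t)^2)) t := ((hF' t).const_mul γω).exp
    have this : HasDerivAt (fun t => ωtil t * Real.exp (γω * F t)) _ t := (hω' t).mul h2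
    convert this using 1
    ring
  have hφcont : Continuous (fun s => -(1/J) * Ttil s * Real.exp (γω * F s)) :=
    (continuous_const.mul hTcont).mul (Real.continuous_exp.comp (continuous_const.mul hFcont))
  have hFTC : ∀ t : ℝ, ωtil t * Real.exp (γω * F t) - ωtil 0 =
      ∫ s in (0:ℝ)..t, -(1/J) * Ttil s * Real.exp (γω * F s) := by
    intro t
    have := intervalIntegral.integral_eq_sub_of_hasDerivAt
      (f := fun t => ωtil t * Real.exp (γω * F t)) (fun s _ => hhderiv s)
      (hφcont.intervalIntegrable 0 t)
    rw [this]
    simp [hF0]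
  -- constants
  set ρ : ℝ := min (γT * μ / T) (γω * μ / T) / 2 with hρ_def
  have hρ : 0 < ρ := by
    rw [hρ_def]
    have h1 : 0 < γT * μ / T := by positivity
    have h2 : 0 < γω * μ / T := by positivity
    have := lt_min h1 h2
    linarith
  have hρα : 2 * ρ ≤ γT * μ / T := by
    have := min_le_left (γT * μ / T) (γω * μ / T); rw [hρ_def]; linarith
  have hρβ : 2 * ρ ≤ γω * μ / T := by
    have := min_le_right (γT * μ / T) (γω * μ / T); rw [hρ_def]; linarith
  -- F lower bound from 0
  have hFlb : ∀ t : ℝ, 0 ≤ t → μ * t / T - μ ≤ F t := by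
    intro t ht
    have := hFdiff 0 t le_rfl ht
    rw [hF0] at this
    have h : μ * ((t - 0)/T - 1) = μ * t / T - μ := by ring
    linarith [h ▸ this]
  -- bound on Ttil
  have hTbd : ∀ t : ℝ, 0 ≤ t → |Ttil t| ≤ |Ttil 0| * (Real.exp (γT * μ) * Real.exp (-ρ * t)) := by
    intro t ht
    rw [hTform t, abs_mul, abs_of_pos (Real.exp_pos _)]
    refine mul_le_mul_of_nonneg_left ?_ (abs_nonneg _)
    rw [← Real.exp_add]
    apply Real.exp_le_exp.mpr
    have hFt := hFlb t ht
    have h1 : γT * (μ * t / T - μ) ≤ γT * F t := mul_le_mul_of_nonneg_left hFt hγT.le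
    have h2 : 2 * ρ * t ≤ (γT * μ / T) * t := mul_le_mul_of_nonneg_right hρα ht
    have h3 : 0 ≤ ρ * t := mul_nonneg hρ.le ht
    have e1 : γT * (μ * t / T - μ) = γT * μ / T * t - γT * μ := by ring
    rw [e1] at h1
    linarith
  -- pointwise bound for the integrand in the ω estimate
  have hpoint : ∀ t : ℝ, 0 ≤ t → ∀ s ∈ Set.Icc (0:ℝ) t,
      |(-(1/J) * Ttil s * Real.exp (γω * F s))| * Real.exp (-(γω * F t))
      ≤ (|Ttil 0| / J * Real.exp ((γT + γω) * μ) * Real.exp (-ρ * t)) * Real.exp (-ρ * s) := by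
    intro t ht s hsmem
    obtain ⟨hs0, hst⟩ := hsmem
    have hTs : |Ttil s| = |Ttil 0| * Real.exp (-(γT * F s)) := by
      rw [hTform s, abs_mul, abs_of_pos (Real.exp_pos _)]
    have habs : |(-(1/J) * Ttil s * Real.exp (γω * F s))| =
        1/J * |Ttil s| * Real.exp (γω * F s) := by
      rw [abs_mul, abs_mul, abs_neg, abs_of_pos (by positivity : (0:ℝ) < 1/J),
        abs_of_pos (Real.exp_pos _)]
    rw [habs, hTs]
    have hexp : Real.exp (-(γT * F s)) * Real.exp (γω * F s) * Real.exp (-(γω * F t))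
        ≤ Real.exp ((γT + γω) * μ) * Real.exp (-ρ * t) * Real.exp (-ρ * s) := by
      rw [← Real.exp_add, ← Real.exp_add, ← Real.exp_add, ← Real.exp_add]
      apply Real.exp_le_exp.mpr
      have hFs := hFlb s hs0
      have hFts := hFdiff s t hs0 hst
      have h1 : γT * (μ * s / T - μ) ≤ γT * F s := mul_le_mul_of_nonneg_left hFs hγT.le
      have h2 : γω * (μ * ((t - s) / T - 1)) ≤ γω * (F t - F s) :=
        mul_le_mul_of_nonneg_left hFts hγω.le
      have h3 : 2 * ρ * s ≤ (γT * μ / T) * s := mul_le_mul_of_nonneg_right hρα hs0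
      have h4 : 2 * ρ * (t - s) ≤ (γω * μ / T) * (t - s) :=
        mul_le_mul_of_nonneg_right hρβ (by linarith)
      have h5 : ρ * s ≤ ρ * t := mul_le_mul_of_nonneg_left hst hρ.le
      have e1 : γT * (μ * s / T - μ) = γT * μ / T * s - γT * μ := by ring
      have e2 : γω * (μ * ((t - s) / T - 1)) = γω * μ / T * (t - s) - γω * μ := by ring
      rw [e1] at h1
      rw [e2] at h2
      linarith
    calc 1/J * (|Ttil 0| * Real.exp (-(γT * F s))) * Real.exp (γω * F s) * Real.exp (-(γω * F t))
        = |Ttil 0| / J * (Real.exp (-(γT * F s)) * Real.exp (γω * F s) * Real.exp (-(γω * F t))) := by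
          ring
      _ ≤ |Ttil 0| / J * (Real.exp ((γT + γω) * μ) * Real.exp (-ρ * t) * Real.exp (-ρ * s)) :=
          mul_le_mul_of_nonneg_left hexp (by positivity)
      _ = _ := by ring
  -- the exponential integral bound
  have hexpint : ∀ t : ℝ, 0 ≤ t → (∫ s in (0:ℝ)..t, Real.exp (-ρ * s)) ≤ 1/ρ := by
    intro t ht
    have hanti : ∀ s : ℝ, HasDerivAt (fun s => -(1/ρ) * Real.exp (-ρ * s)) (Real.exp (-ρ * s)) s := by
      intro s
      have h1 : HasDerivAt (fun s : ℝ => -ρ * s) (-ρ) s := by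
        simpa using (hasDerivAt_id s).const_mul (-ρ)
      have h2 : HasDerivAt (fun s => -(1/ρ) * Real.exp (-ρ * s)) _ s := (h1.exp).const_mul (-(1/ρ))
      convert h2 using 1
      field_simp
    rw [intervalIntegral.integral_eq_sub_of_hasDerivAt (fun s _ => hanti s)
      ((Real.continuous_exp.comp (continuous_const.mul continuous_id)).intervalIntegrable 0 t)]
    have hp : 0 ≤ 1/ρ * Real.exp (-ρ * t) := by positivity
    have h0 : -ρ * (0:ℝ) = 0 := by ring
    rw [h0, Real.exp_zero]
    linarith
  -- bound on ωtil
  have hωbd : ∀ t : ℝ, 0 ≤ t →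
      |ωtil t| ≤ (|ωtil 0| * Real.exp (γω * μ) + |Ttil 0| / (J * ρ) * Real.exp ((γT + γω) * μ))
        * Real.exp (-ρ * t) := by
    intro t ht
    have hωeq : |ωtil t| = |ωtil t * Real.exp (γω * F t)| * Real.exp (-(γω * F t)) := by
      rw [abs_mul, abs_of_pos (Real.exp_pos _), mul_assoc, ← Real.exp_add]
      simp
    have hg : |ωtil t * Real.exp (γω * F t)| ≤
        |ωtil 0| + ∫ s in (0:ℝ)..t, |(-(1/J) * Ttil s * Real.exp (γω * F s))| := by
      have h1 := hFTC t
      have h2 : |∫ s in (0:ℝ)..t, -(1/J) * Ttil s * Real.exp (γω * F s)|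
          ≤ ∫ s in (0:ℝ)..t, |(-(1/J) * Ttil s * Real.exp (γω * F s))| :=
        intervalIntegral.abs_integral_le_integral_abs ht
      have h3 : ωtil t * Real.exp (γω * F t)
          = ωtil 0 + ∫ s in (0:ℝ)..t, -(1/J) * Ttil s * Real.exp (γω * F s) := by
        linarith
      rw [h3]
      exact (abs_add_le _ _).trans (by linarith)
    rw [hωeq]
    have hE : 0 ≤ Real.exp (-(γω * F t)) := (Real.exp_pos _).le
    have step1 : |ωtil t * Real.exp (γω * F t)| * Real.exp (-(γω * F t)) ≤
        |ωtil 0| * Real.exp (-(γω * F t))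
        + (∫ s in (0:ℝ)..t, |(-(1/J) * Ttil s * Real.exp (γω * F s))|) * Real.exp (-(γω * F t)) := by
      have := mul_le_mul_of_nonneg_right hg hE
      linarith [this, add_mul (|ωtil 0|)
        (∫ s in (0:ℝ)..t, |(-(1/J) * Ttil s * Real.exp (γω * F s))|) (Real.exp (-(γω * F t)))]
    -- term 1
    have hterm1 : |ωtil 0| * Real.exp (-(γω * F t)) ≤
        |ωtil 0| * (Real.exp (γω * μ) * Real.exp (-ρ * t)) := by
      refine mul_le_mul_of_nonneg_left ?_ (abs_nonneg _)
      rw [← Real.exp_add]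
      apply Real.exp_le_exp.mpr
      have hFt := hFlb t ht
      have h1 : γω * (μ * t / T - μ) ≤ γω * F t := mul_le_mul_of_nonneg_left hFt hγω.le
      have h2 : 2 * ρ * t ≤ (γω * μ / T) * t := mul_le_mul_of_nonneg_right hρβ ht
      have h3 : 0 ≤ ρ * t := mul_nonneg hρ.le ht
      have e1 : γω * (μ * t / T - μ) = γω * μ / T * t - γω * μ := by ring
      rw [e1] at h1
      linarith
    -- term 2
    have hterm2 : (∫ s in (0:ℝ)..t, |(-(1/J) * Ttil s * Real.exp (γω * F s))|)
          * Real.exp (-(γω * F t))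
        ≤ |Ttil 0| / (J * ρ) * Real.exp ((γT + γω) * μ) * Real.exp (-ρ * t) := by
      rw [← intervalIntegral.integral_mul_const]
      have hmono : (∫ s in (0:ℝ)..t,
            |(-(1/J) * Ttil s * Real.exp (γω * F s))| * Real.exp (-(γω * F t)))
          ≤ ∫ s in (0:ℝ)..t,
            (|Ttil 0| / J * Real.exp ((γT + γω) * μ) * Real.exp (-ρ * t)) * Real.exp (-ρ * s) := by
        apply intervalIntegral.integral_mono_on ht
        · exact ((hφcont.abs).mul continuous_const).intervalIntegrable 0 t
        · exact (continuous_const.mul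
            (Real.continuous_exp.comp (continuous_const.mul continuous_id))).intervalIntegrable 0 t
        · exact hpoint t ht
      refine hmono.trans ?_
      rw [intervalIntegral.integral_const_mul]
      have hc : 0 ≤ |Ttil 0| / J * Real.exp ((γT + γω) * μ) * Real.exp (-ρ * t) := by positivity
      calc (|Ttil 0| / J * Real.exp ((γT + γω) * μ) * Real.exp (-ρ * t))
            * ∫ s in (0:ℝ)..t, Real.exp (-ρ * s)
          ≤ (|Ttil 0| / J * Real.exp ((γT + γω) * μ) * Real.exp (-ρ * t)) * (1/ρ) :=
            mul_le_mul_of_nonneg_left (hexpint t ht) hc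
        _ = |Ttil 0| / (J * ρ) * Real.exp ((γT + γω) * μ) * Real.exp (-ρ * t) := by
            field_simp
      done
    calc |ωtil t * Real.exp (γω * F t)| * Real.exp (-(γω * F t)) ≤ _ := step1
      _ ≤ |ωtil 0| * (Real.exp (γω * μ) * Real.exp (-ρ * t))
          + |Ttil 0| / (J * ρ) * Real.exp ((γT + γω) * μ) * Real.exp (-ρ * t) :=
        add_le_add hterm1 hterm2
      _ = _ := by ring
  -- assemble
  refine ⟨Real.exp ((γT + γω) * μ) * (1 + 1/(J*ρ)), by positivity, ρ, hρ, ?_⟩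
  intro t ht
  have hK1 : Real.exp (γT * μ) ≤ Real.exp ((γT + γω) * μ) := by
    apply Real.exp_le_exp.mpr; nlinarith
  have hK2 : Real.exp (γω * μ) ≤ Real.exp ((γT + γω) * μ) := by
    apply Real.exp_le_exp.mpr; nlinarith
  have h1 := hTbd t ht
  have h2 := hωbd t ht
  have hE : 0 < Real.exp (-ρ * t) := Real.exp_pos _
  have hT0 : 0 ≤ |Ttil 0| := abs_nonneg _
  have hω0 : 0 ≤ |ωtil 0| := abs_nonneg _
  have hJρ : 0 < 1/(J*ρ) := by positivity
  have key : |Ttil 0| * (Real.exp (γT * μ) * Real.exp (-ρ * t))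
      + (|ωtil 0| * Real.exp (γω * μ) + |Ttil 0| / (J * ρ) * Real.exp ((γT + γω) * μ))
        * Real.exp (-ρ * t)
      ≤ Real.exp ((γT + γω) * μ) * (1 + 1/(J*ρ)) * (|Ttil 0| + |ωtil 0|) * Real.exp (-ρ * t) := by
    have hKpos : 0 < Real.exp ((γT + γω) * μ) := Real.exp_pos _
    have c1 : |Ttil 0| * Real.exp (γT * μ) ≤ |Ttil 0| * Real.exp ((γT + γω) * μ) :=
      mul_le_mul_of_nonneg_left hK1 hT0
    have c2 : |ωtil 0| * Real.exp (γω * μ) ≤ |ωtil 0| * Real.exp ((γT + γω) * μ) :=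
      mul_le_mul_of_nonneg_left hK2 hω0
    have c3 : 0 ≤ |ωtil 0| * (1/(J*ρ)) * Real.exp ((γT + γω) * μ) := by positivity
    have inner : |Ttil 0| * Real.exp (γT * μ)
        + (|ωtil 0| * Real.exp (γω * μ) + |Ttil 0| / (J * ρ) * Real.exp ((γT + γω) * μ))
        ≤ Real.exp ((γT + γω) * μ) * (1 + 1/(J*ρ)) * (|Ttil 0| + |ωtil 0|) := by
      have hd : |Ttil 0| / (J * ρ) * Real.exp ((γT + γω) * μ)
          = |Ttil 0| * (1/(J*ρ)) * Real.exp ((γT + γω) * μ) := by ring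
      have hexpand : Real.exp ((γT + γω) * μ) * (1 + 1/(J*ρ)) * (|Ttil 0| + |ωtil 0|)
          = |Ttil 0| * Real.exp ((γT + γω) * μ) + |ωtil 0| * Real.exp ((γT + γω) * μ)
            + |Ttil 0| * (1/(J*ρ)) * Real.exp ((γT + γω) * μ)
            + |ωtil 0| * (1/(J*ρ)) * Real.exp ((γT + γω) * μ) := by ring
      rw [hd, hexpand]
      linarith
    calc |Ttil 0| * (Real.exp (γT * μ) * Real.exp (-ρ * t))
        + (|ωtil 0| * Real.exp (γω * μ) + |Ttil 0| / (J * ρ) * Real.exp ((γT + γω) * μ))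
          * Real.exp (-ρ * t)
        = (|Ttil 0| * Real.exp (γT * μ)
          + (|ωtil 0| * Real.exp (γω * μ) + |Ttil 0| / (J * ρ) * Real.exp ((γT + γω) * μ)))
          * Real.exp (-ρ * t) := by ring
      _ ≤ Real.exp ((γT + γω) * μ) * (1 + 1/(J*ρ)) * (|Ttil 0| + |ωtil 0|) * Real.exp (-ρ * t) :=
          mul_le_mul_of_nonneg_right inner hE.le
  linarith
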